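/- Let V be a commutative unital quantale, (X,a) a V-category, M ⊆ X and x ∈ X. Then the following are equivalent: (i) for every V-category (Y,b) and all V-functors f,g : X → Y with f|_M = g|_M one has k ≤ b(f(x),g(x)) and k ≤ b(g(x),f(x)); (ii) k ≤ ⋁_{y∈M} a(x,y) ⊗ a(y,x). -/

import Mathlib

open IsQuantale Quantale

section aux
variable {V : Type w} [CommMonoid V] [CompleteLattice V] [IsQuantale V]

lemma aux_hom_refl (u : V) : (1 : V) ≤ u ⇨ₗ u :=
  leftMulResiduation_le_iff_mul_le.mpr (by simp)

lemma aux_hom_eval (u v : V) : (u ⇨ₗ v) * u ≤ v :=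
  leftMulResiduation_le_iff_mul_le.mp le_rfl

lemma aux_hom_trans (u v w : V) : (v ⇨ₗ u) * (w ⇨ₗ v) ≤ w ⇨ₗ u := by
  rw [leftMulResiduation_le_iff_mul_le, mul_assoc]
  calc (v ⇨ₗ u) * ((w ⇨ₗ v) * w) ≤ (v ⇨ₗ u) * v :=
        mul_le_mul_right (aux_hom_eval w v) _
    _ ≤ u := aux_hom_eval v u

lemma aux_mul_iSup_le {ι : Sort*} (g : ι → V) (x c : V) (h : ∀ i, x * g i ≤ c) :
    x * iSup g ≤ c := by
  rw [iSup, mul_sSup_distrib]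
  exact iSup₂_le fun y hy => by obtain ⟨i, rfl⟩ := hy; exact h i

end aux

/-- for a V-category `(X,a)`, `M ⊆ X` and `x ∈ X`, `x` lies in the
L-closure of `M` (condition (i), via pairs of V-functors agreeing on `M`) iff
`k ≤ ⋁_{y ∈ M} a x y ⊗ a y x`. -/
theorem stmt10 {V : Type w} [CommMonoid V] [CompleteLattice V] [IsQuantale V]
    {X : Type u}
    (a : X → X → V) (ha1 : ∀ x, (1 : V) ≤ a x x)
    (ha2 : ∀ x y z, a x y * a y z ≤ a x z)
    (M : Set X) (x : X) :
    (∀ (Y : Type (max u w)) (b : Y → Y → V),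
      (∀ y, (1 : V) ≤ b y y) → (∀ x y z, b x y * b y z ≤ b x z) →
      ∀ f g : X → Y,
        (∀ x x', a x x' ≤ b (f x) (f x')) →
        (∀ x x', a x x' ≤ b (g x) (g x')) →
        (∀ m ∈ M, f m = g m) →
        (1 : V) ≤ b (f x) (g x) ∧ (1 : V) ≤ b (g x) (f x)) ↔
      (1 : V) ≤ ⨆ y ∈ M, a x y * a y x := by
  constructor
  · intro H
    -- build Y = ULift V with b(u,v) = v ⇨ₗ u
    set b : ULift.{u} V → ULift.{u} V → V := fun u v => v.down ⇨ₗ u.down with hb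
    have hb1 : ∀ y, (1 : V) ≤ b y y := fun y => aux_hom_refl y.down
    have hb2 : ∀ u v w, b u v * b v w ≤ b u w := fun u v w =>
      aux_hom_trans u.down v.down w.down
    set F : X → ULift.{u} V := fun z => ⟨⨆ y ∈ M, a z y * a y x⟩ with hF
    set G : X → ULift.{u} V := fun z => ⟨a z x⟩ with hG
    have hFf : ∀ z z', a z z' ≤ b (F z) (F z') := by
      intro z z'
      rw [leftMulResiduation_le_iff_mul_le]
      simp only [hF]
      apply aux_mul_iSup_le; intro y
      apply aux_mul_iSup_le; intro hy
      calc a z z' * (a z' y * a y x) = (a z z' * a z' y) * a y x := by rw [mul_assoc]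
        _ ≤ a z y * a y x := mul_le_mul_left (ha2 z z' y) _
        _ ≤ ⨆ y ∈ M, a z y * a y x := le_iSup₂ (f := fun y _ => a z y * a y x) y hy
    have hGf : ∀ z z', a z z' ≤ b (G z) (G z') := by
      intro z z'
      rw [leftMulResiduation_le_iff_mul_le]
      exact ha2 z z' x
    have hagree : ∀ m ∈ M, F m = G m := by
      intro m hm
      have h1 : (⨆ y ∈ M, a m y * a y x) ≤ a m x := iSup₂_le fun y _ => ha2 m y x
      have h2 : a m x ≤ ⨆ y ∈ M, a m y * a y x := by
        calc a m x = 1 * a m x := (one_mul _).symm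
          _ ≤ a m m * a m x := mul_le_mul_left (ha1 m) _
          _ ≤ _ := le_iSup₂ (f := fun y _ => a m y * a y x) m hm
      exact congrArg ULift.up (le_antisymm h1 h2)
    obtain ⟨h, -⟩ := H (ULift.{u} V) b hb1 hb2 F G hFf hGf hagree
    -- h : 1 ≤ b (F x) (G x) = a x x ⇨ₗ (⨆ ...)
    have := leftMulResiduation_le_iff_mul_le.mp h
    rw [one_mul] at this
    exact le_trans (ha1 x) this
  · intro h Y b hb1 hb2 f g hf hg hfg
    have key : ∀ (p q : X → Y), (∀ x x', a x x' ≤ b (p x) (p x')) →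
        (∀ x x', a x x' ≤ b (q x) (q x')) → (∀ m ∈ M, p m = q m) →
        (1 : V) ≤ b (p x) (q x) := by
      intro p q hp hq hpq
      refine le_trans h (iSup₂_le fun y hy => ?_)
      calc a x y * a y x ≤ b (p x) (p y) * b (q y) (q x) :=
            mul_le_mul' (hp x y) (hq y x)
        _ = b (p x) (q y) * b (q y) (q x) := by rw [hpq y hy]
        _ ≤ b (p x) (q x) := hb2 _ _ _
    exact ⟨key f g hf hg hfg, key g f hg hf fun m hm => (hfg m hm).symm⟩
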